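/- Let V be a 4-dimensional complex vector space with a nondegenerate alternating bilinear form σ. For every A ∈ 𝔰𝔭(V,σ) with A ∘ A = 0 there exist v, w ∈ V with σ(v,w) = 0 and A = ε(v ⊗ w), i.e. A(x) = σ(v,x)·w + σ(w,x)·v for all x ∈ V. In other words, the map ε : W → Z is surjective, where Z = {A ∈ 𝔰𝔭(V,σ) : A² = 0}. -/

import Mathlib

/-- The endomorphism `ε(v ⊗ w) : x ↦ σ(v,x)·w + σ(w,x)·v` of `V`, for `v w : V`. -/
def eps {V : Type*} [AddCommGroup V] [Module ℂ V]
    (σ : V →ₗ[ℂ] V →ₗ[ℂ] ℂ) (v w : V) : V →ₗ[ℂ] V :=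
  (σ v).smulRight w + (σ w).smulRight v

/-- Auxiliary: given a nondegenerate antisymmetric form and two "independent" vectors
`u₁, u₂`, there is `z` with `σ z u₁ = 1` and `σ z u₂ = 0`. -/
lemma aux_exists_dual {V : Type*} [AddCommGroup V] [Module ℂ V]
    (σ : V →ₗ[ℂ] V →ₗ[ℂ] ℂ)
    (hnd : ∀ v : V, (∀ w : V, σ v w = 0) → v = 0)
    (hskew : ∀ x y : V, σ x y = - σ y x)
    (u₁ u₂ : V)
    (hind : ∀ s t : ℂ, s • u₁ + t • u₂ = 0 → s = 0 ∧ t = 0) :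
    ∃ z : V, σ z u₁ = 1 ∧ σ z u₂ = 0 := by
  -- right nondegeneracy
  have hnd' : ∀ u : V, (∀ x : V, σ x u = 0) → u = 0 := by
    intro u hu
    refine hnd u (fun x => ?_)
    rw [hskew u x, hu x, neg_zero]
  by_cases hcase : ∃ x₀ : V, σ x₀ u₂ ≠ 0
  · obtain ⟨x₀, hx₀⟩ := hcase
    by_cases hcase2 : ∃ x : V, σ x u₂ = 0 ∧ σ x u₁ ≠ 0
    · obtain ⟨x, hx2, hx1⟩ := hcase2
      refine ⟨(σ x u₁)⁻¹ • x, ?_, ?_⟩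
      · simp [map_smul, inv_mul_cancel₀ hx1]
      · simp [map_smul, hx2]
    · push_neg at hcase2
      -- every x with σ x u₂ = 0 has σ x u₁ = 0; deduce u₁ ∈ ℂ • u₂
      set t : ℂ := σ x₀ u₁ / σ x₀ u₂ with ht
      have key : ∀ x : V, σ x (u₁ - t • u₂) = 0 := by
        intro x
        have h0 : σ (x - (σ x u₂ / σ x₀ u₂) • x₀) u₂ = 0 := by
          simp [map_sub, LinearMap.sub_apply, LinearMap.smul_apply]
          field_simp
          ring
        have h1 := hcase2 _ h0
        simp only [map_sub, LinearMap.sub_apply, LinearMap.smul_apply, map_smul,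
          smul_eq_mul, sub_eq_zero] at h1
        simp only [map_sub, map_smul, smul_eq_mul, ht]
        rw [h1]
        field_simp
        ring
      have hu : u₁ - t • u₂ = 0 := hnd' _ key
      have := hind 1 (-t) (by rw [one_smul, neg_smul, ← sub_eq_add_neg]; exact hu)
      exact absurd this.1 one_ne_zero
  · push_neg at hcase
    have hu2 : u₂ = 0 := hnd' _ hcase
    have := hind 0 1 (by simp [hu2])
    exact absurd this.2 one_ne_zero

/-- Let `V` be a 4-dimensional complex vector space with a nondegenerate
alternating bilinear form `σ`. For every `A ∈ 𝔰𝔭(V,σ)` with `A ∘ A = 0` there exist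
`v, w ∈ V` with `σ(v,w) = 0` and `A = ε(v ⊗ w)`, i.e. `A x = σ(v,x)·w + σ(w,x)·v` for all
`x ∈ V`.  In other words, the map `ε : W → Z` is surjective, where
`Z = {A ∈ 𝔰𝔭(V,σ) : A² = 0}`. -/
theorem eps_surjective_onto_square_zero
    {V : Type*} [AddCommGroup V] [Module ℂ V] [FiniteDimensional ℂ V]
    (hdim : Module.finrank ℂ V = 4)
    (σ : V →ₗ[ℂ] V →ₗ[ℂ] ℂ)
    (halt : ∀ v : V, σ v v = 0)
    (hnd : ∀ v : V, (∀ w : V, σ v w = 0) → v = 0)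
    (A : V →ₗ[ℂ] V)
    (hA : ∀ v w : V, σ (A v) w + σ v (A w) = 0)
    (hA2 : A ∘ₗ A = 0) :
    ∃ v w : V, σ v w = 0 ∧ A = eps σ v w := by
  classical
  have hskew : ∀ x y : V, σ x y = - σ y x := by
    intro x y
    have h := halt (x + y)
    simp only [map_add, LinearMap.add_apply, halt] at h
    linear_combination h
  by_cases hA0 : A = 0
  · refine ⟨0, 0, by simp, ?_⟩
    ext y
    simp [hA0, eps]
  -- A ∘ A = 0, pointwise
  have hkerA : ∀ x : V, A (A x) = 0 := by
    intro x
    have := LinearMap.ext_iff.1 hA2 x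
    simpa using this
  -- the range of A has dimension ≤ 2
  have hrk : Module.finrank ℂ (LinearMap.range A) ≤ 2 := by
    have hle : LinearMap.range A ≤ LinearMap.ker A := by
      rintro x ⟨y, rfl⟩
      exact hkerA y
    have h1 := LinearMap.finrank_range_add_finrank_ker A
    have h2 := Submodule.finrank_mono hle
    rw [hdim] at h1
    omega
  have hrkpos : 0 < Module.finrank ℂ (LinearMap.range A) := by
    refine Nat.pos_of_ne_zero (fun h => ?_)
    rw [Submodule.finrank_eq_zero, LinearMap.range_eq_bot] at h
    exact hA0 h
  -- obtain u₁ u₂ "independent" with range A ⊆ span {u₁, u₂}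
  obtain ⟨u₁, u₂, hind, hspan⟩ :
      ∃ u₁ u₂ : V, (∀ s t : ℂ, s • u₁ + t • u₂ = 0 → s = 0 ∧ t = 0) ∧
        (∀ y : V, ∃ s t : ℂ, A y = s • u₁ + t • u₂) := by
    interval_cases h : Module.finrank ℂ (LinearMap.range A)
    · -- rank 1
      obtain ⟨v₀, hv₀, hv⟩ := finrank_eq_one_iff'.1 h
      have hu₁ : (v₀ : V) ≠ 0 := by
        simpa using Subtype.coe_injective.ne_iff.2 hv₀
      -- find u₂ outside span {u₁}
      have hne : Submodule.span ℂ {(v₀ : V)} ≠ ⊤ := by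
        intro htop
        have := finrank_span_singleton (K := ℂ) hu₁
        rw [htop, finrank_top ℂ V, hdim] at this
        omega
      obtain ⟨u₂, hu₂⟩ : ∃ u₂ : V, u₂ ∉ Submodule.span ℂ {(v₀ : V)} := by
        by_contra hcon
        push_neg at hcon
        exact hne (Submodule.eq_top_iff'.2 hcon)
      refine ⟨(v₀ : V), u₂, ?_, ?_⟩
      · intro s t hst
        have ht : t = 0 := by
          by_contra ht0
          have h3 : t • u₂ = (-s) • (v₀ : V) := by
            rw [neg_smul]
            rw [add_comm] at hst
            exact eq_neg_of_add_eq_zero_left hst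
          have h4 : u₂ = (t⁻¹ * (-s)) • (v₀ : V) := by
            rw [← smul_smul, ← h3, inv_smul_smul₀ ht0]
          exact hu₂ (Submodule.mem_span_singleton.2 ⟨t⁻¹ * (-s), h4.symm⟩)
        subst ht
        rw [zero_smul, add_zero, smul_eq_zero] at hst
        exact ⟨hst.resolve_right hu₁, rfl⟩
      · intro y
        obtain ⟨c, hc⟩ := hv ⟨A y, LinearMap.mem_range_self A y⟩
        refine ⟨c, 0, ?_⟩
        rw [zero_smul, add_zero]
        calc A y = ((c • v₀ : LinearMap.range A) : V) := by rw [hc]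
        _ = c • (v₀ : V) := rfl
    · -- rank 2
      set W := LinearMap.range A
      let b : Module.Basis (Fin 2) ℂ W := Module.finBasisOfFinrankEq ℂ W h
      refine ⟨(b 0 : V), (b 1 : V), ?_, ?_⟩
      · intro s t hst
        have : s • (b 0) + t • (b 1) = (0 : W) := by
          apply Subtype.coe_injective
          push_cast
          exact hst
        have hli := Fintype.linearIndependent_iff.1 b.linearIndependent ![s, t]
          (by rw [Fin.sum_univ_two]; simpa using this)
        exact ⟨hli 0, hli 1⟩
      · intro y
        have hmem : A y ∈ W := LinearMap.mem_range_self A y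
        obtain ⟨s, t, hst⟩ : ∃ s t : ℂ, (⟨A y, hmem⟩ : W) = s • b 0 + t • b 1 := by
          refine ⟨b.repr ⟨A y, hmem⟩ 0, b.repr ⟨A y, hmem⟩ 1, ?_⟩
          have := b.sum_repr ⟨A y, hmem⟩
          rw [Fin.sum_univ_two] at this
          exact this.symm
        refine ⟨s, t, ?_⟩
        have := congrArg (Subtype.val) hst
        push_cast at this
        exact this
  -- dual vectors
  obtain ⟨z₁, hz11, hz12⟩ := aux_exists_dual σ hnd hskew u₁ u₂ hind
  obtain ⟨z₂, hz22, hz21⟩ := aux_exists_dual σ hnd hskew u₂ u₁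
    (fun s t hst => (hind t s (by rw [add_comm] at hst; exact hst)).symm)
  -- coefficient representation of A
  have hcoef : ∀ y : V, A y = σ z₁ (A y) • u₁ + σ z₂ (A y) • u₂ := by
    intro y
    obtain ⟨s, t, h⟩ := hspan y
    rw [h]
    simp [map_add, map_smul, hz11, hz12, hz21, hz22]
  -- symmetry of (x, y) ↦ σ x (A y)
  have hsymm : ∀ x y : V, σ x (A y) = σ y (A x) := by
    intro x y
    linear_combination hskew x (A y) - hA y x
  set a := σ z₁ (A z₁) with ha
  set b := σ z₁ (A z₂) with hb
  set c := σ z₂ (A z₂) with hc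
  have hb' : σ z₂ (A z₁) = b := hsymm z₂ z₁
  have h1rep : ∀ y : V, σ z₁ (A y) = a * σ y u₁ + b * σ y u₂ := by
    intro y
    rw [hsymm z₁ y, hcoef z₁, hb']
    simp only [map_add, map_smul, smul_eq_mul]
    rfl
  have h2rep : ∀ y : V, σ z₂ (A y) = b * σ y u₁ + c * σ y u₂ := by
    intro y
    rw [hsymm z₂ y, hcoef z₂]
    simp only [map_add, map_smul, smul_eq_mul]
    rfl
  -- factor the binary quadratic form
  obtain ⟨α, β, γ, δ, e1, e2, e3⟩ :
      ∃ α β γ δ : ℂ, a = -(2*(α*γ)) ∧ b = -(α*δ + β*γ) ∧ c = -(2*(β*δ)) := by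
    by_cases ha0 : a = 0
    · exact ⟨0, 1, -b, -c/2, by simp [ha0], by ring, by ring⟩
    · obtain ⟨e, he⟩ := IsAlgClosed.exists_pow_nat_eq (b ^ 2 - a * c) (n := 2) (by norm_num)
      refine ⟨1, (b + e)/a, -a/2, (e - b)/2, by ring, by field_simp; ring, ?_⟩
      field_simp
      linear_combination he
  set v := α • u₁ + β • u₂ with hv
  set w := γ • u₁ + δ • u₂ with hw
  have hAeps : A = eps σ v w := by
    ext y
    have heps : eps σ v w y = σ v y • w + σ w y • v := by
      simp [eps]
    rw [heps, hcoef y, h1rep y, h2rep y, hv, hw]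
    have hv1 : σ (α • u₁ + β • u₂) y = -(α * σ y u₁) - β * σ y u₂ := by
      simp only [map_add, map_smul, LinearMap.add_apply, LinearMap.smul_apply, smul_eq_mul]
      rw [hskew u₁ y, hskew u₂ y]; ring
    have hw1 : σ (γ • u₁ + δ • u₂) y = -(γ * σ y u₁) - δ * σ y u₂ := by
      simp only [map_add, map_smul, LinearMap.add_apply, LinearMap.smul_apply, smul_eq_mul]
      rw [hskew u₁ y, hskew u₂ y]; ring
    rw [hv1, hw1, e1, e2, e3]
    module
  refine ⟨v, w, ?_, hAeps⟩
  -- finally, σ v w = 0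
  by_cases hv0 : v = 0
  · rw [hv0]; simp
  · have hAv : A v = σ w v • v := by
      rw [hAeps]
      have : eps σ v w v = σ v v • w + σ w v • v := by simp [eps]
      rw [this, halt v, zero_smul, zero_add]
    have h0 : (σ w v * σ w v) • v = 0 := by
      have := hkerA v
      rw [hAv, map_smul, hAv, smul_smul] at this
      exact this
    rcases smul_eq_zero.1 h0 with h | h
    · rw [hskew v w, mul_self_eq_zero.1 h, neg_zero]
    · exact absurd h hv0
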